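/- Let m ∈ ℕ₀ and let f : ℝ → ℝ be m times pseudo-differentiable with m-fold pseudo-derivative f^{(m)} ∈ L²(γ). Then the Hermite coefficients of f satisfy a_n(f) = o((n+1)^{−m/2}) as n → ∞. -/

import Mathlib

open MeasureTheory ProbabilityTheory Filter Set Asymptotics Topology

noncomputable section

/-- The standard Gaussian measure `N(0,1)` on `ℝ`. -/
def stdGaussian : Measure ℝ := gaussianReal 0 1

/-- The `n`-th normalized probabilists' Hermite polynomial as a function `ℝ → ℝ`. -/
def hermiteFun (n : ℕ) (x : ℝ) : ℝ :=
  (Polynomial.aeval x (Polynomial.hermite n)) / Real.sqrt (n.factorial)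

/-- The `n`-th Hermite coefficient `a_n(f) = ∫ f · h_n dγ`. -/
def hermiteCoeff (f : ℝ → ℝ) (n : ℕ) : ℝ :=
  ∫ x, f x * hermiteFun n x ∂stdGaussian

/-- `g` is a pseudo-derivative of `f`. -/
def IsPseudoDeriv (f g : ℝ → ℝ) : Prop :=
  (∀ a b : ℝ, IntegrableOn g (Set.Icc a b) volume) ∧
  ∀ x : ℝ, f x = f 0 + ∫ t in (0:ℝ)..x, g t

/-- `g` is an `m`-fold pseudo-derivative of `f`. -/
def IsIterPseudoDeriv (m : ℕ) (f g : ℝ → ℝ) : Prop :=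
  ∃ gs : ℕ → ℝ → ℝ, gs 0 = f ∧ gs m = g ∧ ∀ i < m, IsPseudoDeriv (gs i) (gs (i + 1))

namespace HAux

/-- Unnormalized Hermite polynomial function. -/
def He (n : ℕ) (x : ℝ) : ℝ := Polynomial.aeval x (Polynomial.hermite n)

/-- Unnormalized gaussian weight. -/
def gauss (x : ℝ) : ℝ := Real.exp (-(x ^ 2 / 2))

/-- Normalizing constant. -/
def cG : ℝ := (Real.sqrt (2 * Real.pi))⁻¹

lemma gauss_pos (x : ℝ) : 0 < gauss x := Real.exp_pos _

lemma gauss_le_one (x : ℝ) : gauss x ≤ 1 := by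
  rw [gauss, Real.exp_le_one_iff]
  nlinarith [sq_nonneg x]

lemma cG_pos : 0 < cG := by
  have : 0 < Real.sqrt (2 * Real.pi) := Real.sqrt_pos.2 (by positivity)
  exact inv_pos.2 this

lemma continuous_gauss : Continuous gauss := by
  unfold gauss
  fun_prop

lemma continuous_He (n : ℕ) : Continuous (He n) := by
  unfold He; exact Polynomial.continuous_aeval _

lemma He_zero (x : ℝ) : He 0 x = 1 := by
  simp [He, Polynomial.hermite_zero]

lemma hermiteFun_eq (n : ℕ) (x : ℝ) :
    hermiteFun n x = He n x / Real.sqrt (n.factorial) := rfl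

lemma pdf_eq (x : ℝ) : gaussianPDFReal 0 1 x = cG * gauss x := by
  rw [gaussianPDFReal_def]
  simp only [NNReal.coe_one, mul_one, sub_zero]
  rw [cG, gauss, show -x ^ 2 / 2 = -(x ^ 2 / 2) by ring]

lemma measurable_dens : Measurable fun x => (cG * gauss x).toNNReal :=
  (continuous_const.mul continuous_gauss).measurable.real_toNNReal

lemma dens_smul (x : ℝ) (r : ℝ) : ((cG * gauss x).toNNReal : NNReal) • r = cG * (gauss x * r) := by
  rw [NNReal.smul_def, Real.coe_toNNReal _ (mul_nonneg cG_pos.le (gauss_pos x).le), smul_eq_mul]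
  ring

lemma stdGaussian_eq :
    _root_.stdGaussian = volume.withDensity fun x => ((cG * gauss x).toNNReal : ENNReal) := by
  rw [_root_.stdGaussian, gaussianReal_of_var_ne_zero 0 one_ne_zero]
  congr 1
  funext x
  rw [gaussianPDF, pdf_eq]
  rfl

lemma integral_std (u : ℝ → ℝ) :
    ∫ x, u x ∂stdGaussian = cG * ∫ x, gauss x * u x := by
  rw [stdGaussian_eq, integral_withDensity_eq_integral_smul measurable_dens]
  rw [← integral_const_mul]
  congr 1
  funext x
  rw [dens_smul]

lemma integrable_std_iff (u : ℝ → ℝ) :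
    Integrable u stdGaussian ↔ Integrable (fun x => gauss x * u x) volume := by
  rw [stdGaussian_eq, integrable_withDensity_iff_integrable_smul measurable_dens]
  constructor
  · intro h
    have h2 := h.const_mul cG⁻¹
    refine h2.congr (Eventually.of_forall fun x => ?_)
    simp only [dens_smul]
    field_simp [cG_pos.ne']
  · intro h
    have h2 := h.const_mul cG
    refine h2.congr (Eventually.of_forall fun x => ?_)
    exact (dens_smul x (u x)).symm


/-! ### Polynomial growth bounds -/

lemma poly_abs_le (p : Polynomial ℝ) (k : ℕ) (hk : p.natDegree ≤ k) :
    ∃ C : ℝ, 0 < C ∧ ∀ x : ℝ, |p.eval x| ≤ C * (1 + |x|) ^ k := by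
  refine ⟨(∑ i ∈ Finset.range (p.natDegree + 1), |p.coeff i|) + 1, by positivity, fun x => ?_⟩
  have hx1 : (1 : ℝ) ≤ 1 + |x| := by simp [abs_nonneg]
  rw [Polynomial.eval_eq_sum_range]
  calc |∑ i ∈ Finset.range (p.natDegree + 1), p.coeff i * x ^ i|
      ≤ ∑ i ∈ Finset.range (p.natDegree + 1), |p.coeff i * x ^ i| :=
        Finset.abs_sum_le_sum_abs _ _
    _ ≤ ∑ i ∈ Finset.range (p.natDegree + 1), |p.coeff i| * (1 + |x|) ^ k := by
        refine Finset.sum_le_sum fun i hi => ?_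
        rw [abs_mul, abs_pow]
        refine mul_le_mul_of_nonneg_left ?_ (abs_nonneg _)
        calc |x| ^ i ≤ (1 + |x|) ^ i :=
              pow_le_pow_left₀ (abs_nonneg x) (by linarith) i
          _ ≤ (1 + |x|) ^ k := by
              refine pow_le_pow_right₀ hx1 ?_
              have := Finset.mem_range.1 hi
              omega
    _ = (∑ i ∈ Finset.range (p.natDegree + 1), |p.coeff i|) * (1 + |x|) ^ k := by
        rw [Finset.sum_mul]
    _ ≤ ((∑ i ∈ Finset.range (p.natDegree + 1), |p.coeff i|) + 1) * (1 + |x|) ^ k := by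
        refine mul_le_mul_of_nonneg_right (by linarith) (by positivity)

lemma He_abs_le (n : ℕ) : ∃ C : ℝ, 0 < C ∧ ∀ x : ℝ, |He n x| ≤ C * (1 + |x|) ^ n := by
  obtain ⟨C, hC, hb⟩ := poly_abs_le ((Polynomial.hermite n).map (algebraMap ℤ ℝ)) n
    (le_trans Polynomial.natDegree_map_le (le_of_eq Polynomial.natDegree_hermite))
  refine ⟨C, hC, fun x => ?_⟩
  have : He n x = ((Polynomial.hermite n).map (algebraMap ℤ ℝ)).eval x := by
    rw [He, Polynomial.aeval_def, Polynomial.eval_map]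
  rw [this]; exact hb x

/-! ### Weight functions -/

lemma tendsto_weight_atTop (k : ℕ) {b : ℝ} (hb : 0 < b) :
    Tendsto (fun x : ℝ => (1 + |x|) ^ k * Real.exp (-(b * x ^ 2))) atTop (𝓝 0) := by
  have hexp : Tendsto (fun x : ℝ => Real.exp (-x)) atTop (𝓝 0) :=
    Real.tendsto_exp_atBot.comp tendsto_neg_atTop_atBot
  refine squeeze_zero_norm' ?_ hexp
  filter_upwards [eventually_ge_atTop (0 : ℝ), eventually_ge_atTop ((k + 1) / b)] with x hx0 hxb
  have hx : |x| = x := abs_of_nonneg hx0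
  rw [Real.norm_eq_abs, abs_of_nonneg (by positivity)]
  have h1 : (1 + x) ^ k ≤ Real.exp ((k : ℝ) * x) := by
    rw [Real.exp_nat_mul]
    exact pow_le_pow_left₀ (by linarith) (by linarith [Real.add_one_le_exp x]) k
  calc (1 + |x|) ^ k * Real.exp (-(b * x ^ 2))
      ≤ Real.exp ((k : ℝ) * x) * Real.exp (-(b * x ^ 2)) := by
        rw [hx]; exact mul_le_mul_of_nonneg_right h1 (Real.exp_pos _).le
    _ = Real.exp ((k : ℝ) * x - b * x ^ 2) := by rw [← Real.exp_add]; ring_nf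
    _ ≤ Real.exp (-x) := by
        refine Real.exp_le_exp.2 ?_
        have hxb' : (k + 1 : ℝ) ≤ b * x := by
          rw [div_le_iff₀ hb] at hxb
          linarith [mul_comm b x]
        nlinarith

lemma tendsto_weight_atBot (k : ℕ) {b : ℝ} (hb : 0 < b) :
    Tendsto (fun x : ℝ => (1 + |x|) ^ k * Real.exp (-(b * x ^ 2))) atBot (𝓝 0) := by
  have := (tendsto_weight_atTop k hb).comp tendsto_neg_atBot_atTop
  refine this.congr fun x => ?_
  simp [abs_neg, neg_sq]

lemma weight_bounded (k : ℕ) {b : ℝ} (hb : 0 < b) :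
    ∃ C : ℝ, 0 < C ∧ ∀ x : ℝ, (1 + |x|) ^ k * Real.exp (-(b * x ^ 2)) ≤ C := by
  set u : ℝ → ℝ := fun x => (1 + |x|) ^ k * Real.exp (-(b * x ^ 2)) with hu
  have hcont : Continuous u := by
    refine Continuous.mul ?_ ?_
    · exact (continuous_const.add continuous_abs).pow k
    · fun_prop
  have h1 : ∀ᶠ x in atTop, u x < 1 :=
    (tendsto_weight_atTop k hb).eventually (eventually_lt_nhds zero_lt_one)
  have h2 : ∀ᶠ x in atBot, u x < 1 :=
    (tendsto_weight_atBot k hb).eventually (eventually_lt_nhds zero_lt_one)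
  obtain ⟨A, hA⟩ := eventually_atTop.1 h1
  obtain ⟨B, hB⟩ := eventually_atBot.1 h2
  obtain ⟨C0, hC0⟩ := (isCompact_Icc (a := B) (b := A)).exists_bound_of_continuousOn
    hcont.continuousOn
  refine ⟨max 1 C0 + 1, by positivity, fun x => ?_⟩
  rcases le_total x B with hxB | hxB
  · have := hB x hxB
    calc u x ≤ 1 := this.le
      _ ≤ max 1 C0 + 1 := by linarith [le_max_left (1:ℝ) C0]
  · rcases le_total A x with hxA | hxA
    · have := hA x hxA
      calc u x ≤ 1 := this.le
        _ ≤ max 1 C0 + 1 := by linarith [le_max_left (1:ℝ) C0]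
    · have hmem : x ∈ Icc B A := ⟨hxB, hxA⟩
      have := hC0 x hmem
      rw [Real.norm_eq_abs] at this
      calc u x ≤ |u x| := le_abs_self _
        _ ≤ C0 := this
        _ ≤ max 1 C0 + 1 := by linarith [le_max_right (1:ℝ) C0]

lemma integrable_weight (k : ℕ) {b : ℝ} (hb : 0 < b) :
    Integrable (fun x : ℝ => (1 + |x|) ^ k * Real.exp (-(b * x ^ 2))) volume := by
  obtain ⟨C, hC, hCb⟩ := weight_bounded k (half_pos hb)
  have hmaj : Integrable (fun x : ℝ => C * Real.exp (-(b / 2) * x ^ 2)) volume :=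
    (integrable_exp_neg_mul_sq (half_pos hb)).const_mul C
  refine hmaj.mono' ?_ (Eventually.of_forall fun x => ?_)
  · exact (((continuous_const.add continuous_abs).pow k).mul (by fun_prop)).aestronglyMeasurable
  · rw [Real.norm_eq_abs, abs_of_nonneg (by positivity)]
    have : Real.exp (-(b * x ^ 2)) = Real.exp (-(b / 2 * x ^ 2)) * Real.exp (-(b / 2) * x ^ 2) := by
      rw [← Real.exp_add]; ring_nf
    rw [this, ← mul_assoc]
    exact mul_le_mul_of_nonneg_right (hCb x) (Real.exp_pos _).le

lemma integrable_weight_quarter (k : ℕ) :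
    Integrable (fun x : ℝ => (1 + |x|) ^ k * Real.exp (x ^ 2 / 4) * gauss x) volume := by
  refine (integrable_weight k (by norm_num : (0:ℝ) < 1/4)).congr
    (Eventually.of_forall fun x => ?_)
  simp only [gauss]
  rw [mul_assoc, ← Real.exp_add]
  congr 1
  ring


/-! ### Derivative facts -/

lemma hasDerivAt_gauss (x : ℝ) : HasDerivAt gauss (-x * gauss x) x := by
  have h1 : HasDerivAt (fun y : ℝ => -(y ^ 2 / 2)) (-x) x := by
    have := (hasDerivAt_pow 2 x).div_const 2
    simpa using this.fun_neg
  have := h1.exp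
  have e : gauss = fun y => Real.exp (-(y ^ 2 / 2)) := rfl
  rw [e]; simpa [mul_comm] using this

lemma hasDerivAt_He_gauss (n : ℕ) (x : ℝ) :
    HasDerivAt (fun y => He n y * gauss y) (-(He (n + 1) x * gauss x)) x := by
  have h1 : HasDerivAt (fun y => He n y)
      (Polynomial.aeval x (Polynomial.derivative (Polynomial.hermite n))) x :=
    Polynomial.hasDerivAt_aeval (Polynomial.hermite n) x
  have h2 : HasDerivAt (fun y => He n y * gauss y) _ x := h1.fun_mul (hasDerivAt_gauss x)
  convert h2 using 1
  simp only [He]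
  rw [Polynomial.hermite_succ, map_sub, map_mul, Polynomial.aeval_X]
  ring

lemma derivative_hermite (n : ℕ) :
    Polynomial.derivative (Polynomial.hermite (n + 1)) =
      Polynomial.C ((n : ℤ) + 1) * Polynomial.hermite n := by
  induction n with
  | zero => simp [Polynomial.hermite_one, Polynomial.hermite_zero]
  | succ n IH =>
    rw [Polynomial.hermite_succ (n + 1), map_sub, Polynomial.derivative_mul,
      Polynomial.derivative_X, IH, one_mul, Polynomial.derivative_C_mul]
    have hd : Polynomial.derivative (Polynomial.hermite n) =
        Polynomial.X * Polynomial.hermite n - Polynomial.hermite (n + 1) := by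
      rw [Polynomial.hermite_succ n]; ring
    rw [hd]
    have hC : Polynomial.C (((n : ℕ) + 1 : ℕ) : ℤ) + 1 = Polynomial.C ((n : ℤ) + 1) + 1 := by
      push_cast; ring
    have hC2 : Polynomial.C ((((n : ℕ) + 1 : ℕ) : ℤ) + 1) =
        Polynomial.C ((n : ℤ) + 1) + 1 := by
      rw [map_add, Polynomial.C_1]; push_cast; ring
    rw [hC2]
    ring

lemma hasDerivAt_He (n : ℕ) (x : ℝ) :
    HasDerivAt (He (n + 1)) (((n : ℝ) + 1) * He n x) x := by
  have h1 := Polynomial.hasDerivAt_aeval (𝕜 := ℝ) (Polynomial.hermite (n + 1)) x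
  rw [derivative_hermite, map_mul, Polynomial.aeval_C] at h1
  have : (algebraMap ℤ ℝ) ((n : ℤ) + 1) = (n : ℝ) + 1 := by push_cast; ring
  rw [this] at h1
  exact h1

lemma He_antideriv (m : ℕ) (x : ℝ) :
    He (m + 1) x = He (m + 1) 0 + ∫ t in (0:ℝ)..x, ((m : ℝ) + 1) * He m t := by
  rw [intervalIntegral.integral_eq_sub_of_hasDerivAt (fun t _ => hasDerivAt_He m t)
    ((continuous_const.mul (continuous_He m)).intervalIntegrable 0 x)]
  ring

/-! ### Improper integrals of Hermite × gaussian -/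

lemma tendsto_He_gauss_atTop (n : ℕ) :
    Tendsto (fun x => He n x * gauss x) atTop (𝓝 0) := by
  obtain ⟨D, hD, hDb⟩ := He_abs_le n
  have hw := (tendsto_weight_atTop n (by norm_num : (0:ℝ) < 1/2)).const_mul D
  rw [mul_zero] at hw
  refine squeeze_zero_norm' (Eventually.of_forall fun x => ?_) hw
  rw [Real.norm_eq_abs, abs_mul, abs_of_nonneg (gauss_pos x).le]
  have : gauss x = Real.exp (-(1 / 2 * x ^ 2)) := by rw [gauss]; congr 1; ring
  rw [this, ← mul_assoc]
  exact mul_le_mul_of_nonneg_right (hDb x) (Real.exp_pos _).le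

lemma tendsto_He_gauss_atBot (n : ℕ) :
    Tendsto (fun x => He n x * gauss x) atBot (𝓝 0) := by
  obtain ⟨D, hD, hDb⟩ := He_abs_le n
  have hw := (tendsto_weight_atBot n (by norm_num : (0:ℝ) < 1/2)).const_mul D
  rw [mul_zero] at hw
  refine squeeze_zero_norm' (Eventually.of_forall fun x => ?_) hw
  rw [Real.norm_eq_abs, abs_mul, abs_of_nonneg (gauss_pos x).le]
  have : gauss x = Real.exp (-(1 / 2 * x ^ 2)) := by rw [gauss]; congr 1; ring
  rw [this, ← mul_assoc]
  exact mul_le_mul_of_nonneg_right (hDb x) (Real.exp_pos _).le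

lemma integrable_He_mul_gauss (i j : ℕ) :
    Integrable (fun x => He i x * He j x * gauss x) volume := by
  obtain ⟨C, hC, hCb⟩ := He_abs_le i
  obtain ⟨D, hD, hDb⟩ := He_abs_le j
  have hq := (integrable_weight (i + j) (by norm_num : (0:ℝ) < 1/2)).const_mul (C * D)
  refine hq.mono' ?_ (Eventually.of_forall fun x => ?_)
  · exact (((continuous_He i).mul (continuous_He j)).mul continuous_gauss).aestronglyMeasurable
  · rw [Real.norm_eq_abs, abs_mul, abs_mul, abs_of_nonneg (gauss_pos x).le]
    have hg : gauss x = Real.exp (-(1 / 2 * x ^ 2)) := by rw [gauss]; congr 1; ring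
    calc |He i x| * |He j x| * gauss x
        ≤ (C * (1 + |x|) ^ i) * (D * (1 + |x|) ^ j) * gauss x := by
          refine mul_le_mul_of_nonneg_right ?_ (gauss_pos x).le
          exact mul_le_mul (hCb x) (hDb x) (abs_nonneg _) (by positivity)
      _ = C * D * ((1 + |x|) ^ (i + j) * Real.exp (-(1/2 * x ^ 2))) := by
          rw [hg, pow_add]; ring

lemma integrable_He_gauss (j : ℕ) : Integrable (fun x => He j x * gauss x) volume := by
  refine (integrable_He_mul_gauss j 0).congr (Eventually.of_forall fun x => ?_)
  simp [He_zero]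

lemma integral_Ioi_He_gauss (n : ℕ) (t : ℝ) :
    ∫ x in Ioi t, He (n + 1) x * gauss x = He n t * gauss t := by
  have hder : ∀ x ∈ Ici t, HasDerivAt (fun y => -(He n y * gauss y))
      (He (n + 1) x * gauss x) x := by
    intro x _
    simpa using (hasDerivAt_He_gauss n x).fun_neg
  have hint : IntegrableOn (fun x => He (n + 1) x * gauss x) (Ioi t) volume :=
    (integrable_He_gauss (n + 1)).integrableOn
  have htd : Tendsto (fun y => -(He n y * gauss y)) atTop (𝓝 0) := by
    simpa using (tendsto_He_gauss_atTop n).neg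
  have := integral_Ioi_of_hasDerivAt_of_tendsto' hder hint htd
  rw [this]; ring

lemma integral_Iic_He_gauss (n : ℕ) (t : ℝ) :
    ∫ x in Iic t, He (n + 1) x * gauss x = -(He n t * gauss t) := by
  have hder : ∀ x ∈ Iic t, HasDerivAt (fun y => -(He n y * gauss y))
      (He (n + 1) x * gauss x) x := by
    intro x _
    simpa using (hasDerivAt_He_gauss n x).fun_neg
  have hint : IntegrableOn (fun x => He (n + 1) x * gauss x) (Iic t) volume :=
    (integrable_He_gauss (n + 1)).integrableOn
  have htd : Tendsto (fun y => -(He n y * gauss y)) atBot (𝓝 0) := by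
    simpa using (tendsto_He_gauss_atBot n).neg
  have := integral_Iic_of_hasDerivAt_of_tendsto' hder hint htd
  rw [this]; ring

lemma integral_He_succ_gauss (n : ℕ) : ∫ x, He (n + 1) x * gauss x = 0 := by
  have h := intervalIntegral.integral_Iic_add_Ioi (b := (0:ℝ)) (f := fun x => He (n + 1) x * gauss x)
    (integrable_He_gauss (n + 1)).integrableOn (integrable_He_gauss (n + 1)).integrableOn
  rw [← h, integral_Iic_He_gauss n 0, integral_Ioi_He_gauss n 0]
  ring

lemma integral_gauss : ∫ x, gauss x = Real.sqrt (2 * Real.pi) := by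
  have := integral_gaussian (1/2)
  rw [show Real.pi / (1/2) = 2 * Real.pi by ring] at this
  rw [← this]
  congr 1
  funext x
  rw [gauss]
  congr 1
  ring


/-! ### Growth classes -/

/-- Pointwise sub-`exp(x²/4)` polynomial growth. -/
def PolyG (h : ℝ → ℝ) : Prop :=
  ∃ C : ℝ, ∃ k : ℕ, 0 ≤ C ∧ ∀ x : ℝ, |h x| ≤ C * (1 + |x|) ^ k * Real.exp (x ^ 2 / 4)

/-- Integrated sub-`exp(x²/4)` growth. -/
def IntG (g : ℝ → ℝ) : Prop :=
  ∃ C : ℝ, ∃ k : ℕ, 0 ≤ C ∧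
    ∀ x : ℝ, (∫ t in Set.uIoc 0 x, |g t|) ≤ C * (1 + |x|) ^ k * Real.exp (x ^ 2 / 4)

lemma abs_le_abs_of_uIoc {x t : ℝ} (ht : t ∈ Set.uIoc 0 x) : |t| ≤ |x| := by
  rw [Set.mem_uIoc] at ht
  rcases ht with ⟨h1, h2⟩ | ⟨h1, h2⟩
  · rw [abs_of_pos h1, abs_of_nonneg (le_trans h1.le h2)]; exact h2
  · rw [abs_of_nonpos h2, abs_of_neg (lt_of_lt_of_le h1 h2)]
    linarith

lemma polyG_He (j : ℕ) : PolyG (He j) := by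
  obtain ⟨C, hC, hCb⟩ := He_abs_le j
  exact ⟨C, j, hC.le, fun x => le_trans (hCb x)
    (le_mul_of_one_le_right (by positivity) (Real.one_le_exp (by positivity)))⟩

lemma polyG_const_mul {h : ℝ → ℝ} (a : ℝ) (hh : PolyG h) : PolyG (fun x => a * h x) := by
  obtain ⟨C, k, hC, hb⟩ := hh
  refine ⟨|a| * C, k, by positivity, fun x => ?_⟩
  rw [abs_mul, mul_assoc, mul_assoc]
  exact mul_le_mul_of_nonneg_left (by rw [← mul_assoc]; exact hb x) (abs_nonneg a)

lemma uIoc_volume (x : ℝ) : (volume (Set.uIoc 0 x)).toReal = |x| := by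
  rw [Set.uIoc, Real.volume_Ioc, ENNReal.toReal_ofReal_eq_iff.2]
  · rcases le_total 0 x with h | h
    · simp [h, abs_of_nonneg h, max_eq_right h, min_eq_left h]
    · simp [abs_of_nonpos h, max_eq_left h, min_eq_right h]
  · rcases le_total 0 x with h | h
    · simp [max_eq_right h, min_eq_left h]; linarith
    · simp [max_eq_left h, min_eq_right h]; linarith

lemma polyG_intG {g : ℝ → ℝ} (hgm : AEStronglyMeasurable g volume) (hg : PolyG g) :
    IntG g := by
  obtain ⟨C, k, hC, hb⟩ := hg
  refine ⟨C, k + 1, hC, fun x => ?_⟩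
  have hvol : volume (Set.uIoc 0 x) < ⊤ := by
    rw [Set.uIoc, Real.volume_Ioc]; exact ENNReal.ofReal_lt_top
  have hbd : ∀ t ∈ Set.uIoc 0 x, ‖|g t|‖ ≤ C * (1 + |x|) ^ k * Real.exp (x ^ 2 / 4) := by
    intro t ht
    rw [norm_abs_eq_norm, Real.norm_eq_abs]
    refine le_trans (hb t) ?_
    have h1 : |t| ≤ |x| := abs_le_abs_of_uIoc ht
    have h2 : (1 + |t|) ^ k ≤ (1 + |x|) ^ k := pow_le_pow_left₀ (by positivity) (by linarith) k
    have h3 : Real.exp (t ^ 2 / 4) ≤ Real.exp (x ^ 2 / 4) := by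
      refine Real.exp_le_exp.2 ?_
      nlinarith [sq_abs t, sq_abs x, mul_self_le_mul_self (abs_nonneg t) h1]
    calc C * (1 + |t|) ^ k * Real.exp (t ^ 2 / 4)
        ≤ C * (1 + |x|) ^ k * Real.exp (t ^ 2 / 4) := by
          refine mul_le_mul_of_nonneg_right (mul_le_mul_of_nonneg_left h2 hC) (Real.exp_pos _).le
      _ ≤ C * (1 + |x|) ^ k * Real.exp (x ^ 2 / 4) := by
          refine mul_le_mul_of_nonneg_left h3 (by positivity)
  have := norm_setIntegral_le_of_norm_le_const hvol hbd
  rw [Real.norm_eq_abs] at this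
  have h2 := le_trans (le_abs_self _) this
  rw [measureReal_def, uIoc_volume] at h2
  calc (∫ t in Set.uIoc 0 x, |g t|)
      ≤ C * (1 + |x|) ^ k * Real.exp (x ^ 2 / 4) * |x| := h2
    _ ≤ C * (1 + |x|) ^ (k + 1) * Real.exp (x ^ 2 / 4) := by
        rw [pow_succ]
        have : |x| ≤ 1 + |x| := by linarith [abs_nonneg x]
        calc C * (1 + |x|) ^ k * Real.exp (x ^ 2 / 4) * |x|
            ≤ C * (1 + |x|) ^ k * Real.exp (x ^ 2 / 4) * (1 + |x|) := by
              refine mul_le_mul_of_nonneg_left this (by positivity)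
          _ = C * ((1 + |x|) ^ k * (1 + |x|)) * Real.exp (x ^ 2 / 4) := by ring

lemma polyG_antideriv {g f : ℝ → ℝ} (hg : IntG g)
    (hf : ∀ x, f x = f 0 + ∫ t in (0:ℝ)..x, g t) : PolyG f := by
  obtain ⟨C, k, hC, hb⟩ := hg
  refine ⟨|f 0| + C, k, by positivity, fun x => ?_⟩
  have h1 : |f x| ≤ |f 0| + |∫ t in (0:ℝ)..x, g t| := by
    rw [hf x]; exact abs_add_le _ _
  have h2 : |∫ t in (0:ℝ)..x, g t| ≤ ∫ t in Set.uIoc 0 x, |g t| := by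
    have := intervalIntegral.norm_integral_le_integral_norm_uIoc
      (a := (0:ℝ)) (b := x) (f := g) (μ := volume)
    simpa [Real.norm_eq_abs] using this
  have hx1 : (1:ℝ) ≤ (1 + |x|) ^ k * Real.exp (x ^ 2 / 4) := by
    have e1 : (1:ℝ) ≤ (1 + |x|) ^ k := one_le_pow₀ (by linarith [abs_nonneg x])
    have e2 : (1:ℝ) ≤ Real.exp (x ^ 2 / 4) := Real.one_le_exp (by positivity)
    nlinarith
  calc |f x| ≤ |f 0| + (C * (1 + |x|) ^ k * Real.exp (x ^ 2 / 4)) :=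
        le_trans h1 (by linarith [le_trans h2 (hb x)])
    _ ≤ (|f 0| + C) * (1 + |x|) ^ k * Real.exp (x ^ 2 / 4) := by
        have := abs_nonneg (f 0)
        nlinarith [hx1]

lemma integrable_polyG_mul {h : ℝ → ℝ} (hm : AEStronglyMeasurable h volume)
    (hp : PolyG h) (j : ℕ) : Integrable (fun x => h x * He j x * gauss x) volume := by
  obtain ⟨C, k, hC, hb⟩ := hp
  obtain ⟨D, hD, hDb⟩ := He_abs_le j
  have hq := (integrable_weight_quarter (k + j)).const_mul (C * D)
  refine hq.mono' ((hm.mul (continuous_He j).aestronglyMeasurable).mul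
    continuous_gauss.aestronglyMeasurable) (Eventually.of_forall fun x => ?_)
  rw [Real.norm_eq_abs, abs_mul, abs_mul, abs_of_nonneg (gauss_pos x).le]
  calc |h x| * |He j x| * gauss x
      ≤ (C * (1 + |x|) ^ k * Real.exp (x ^ 2 / 4)) * (D * (1 + |x|) ^ j) * gauss x := by
        refine mul_le_mul_of_nonneg_right (mul_le_mul (hb x) (hDb x) (abs_nonneg _)
          (by positivity)) (gauss_pos x).le
    _ = C * D * ((1 + |x|) ^ (k + j) * Real.exp (x ^ 2 / 4) * gauss x) := by
        rw [pow_add]; ring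


/-! ### IntG from L² -/

lemma intG_of_L2 {g : ℝ → ℝ} (hloc : ∀ a b : ℝ, IntegrableOn g (Set.Icc a b) volume)
    (hgm : AEStronglyMeasurable g volume)
    (hg2 : Integrable (fun x => gauss x * g x ^ 2) volume) : IntG g := by
  set Ig := ∫ x, gauss x * g x ^ 2 with hIg
  have hIg0 : 0 ≤ Ig := integral_nonneg fun x => mul_nonneg (gauss_pos x).le (sq_nonneg _)
  refine ⟨(Ig + 1) / 2, 1, by positivity, fun x => ?_⟩
  set s := Set.uIoc 0 x with hs
  have hsub : s ⊆ Set.Icc (min 0 x) (max 0 x) := Set.uIoc_subset_uIcc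
  have hvol : volume s < ⊤ := by
    rw [hs, Set.uIoc, Real.volume_Ioc]; exact ENNReal.ofReal_lt_top
  have hloc_s : IntegrableOn g s volume := (hloc (min 0 x) (max 0 x)).mono_set hsub
  have hgm2 : AEStronglyMeasurable (fun t => g t ^ 2) volume :=
    (hgm.mul hgm).congr (Eventually.of_forall fun t => (sq (g t)).symm)
  have hpt : ∀ t ∈ s, g t ^ 2 ≤ Real.exp (x ^ 2 / 2) * (gauss t * g t ^ 2) := by
    intro t ht
    have h1 : |t| ≤ |x| := abs_le_abs_of_uIoc ht
    have ht2 : t ^ 2 ≤ x ^ 2 := by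
      nlinarith [sq_abs t, sq_abs x, mul_self_le_mul_self (abs_nonneg t) h1]
    have hge : Real.exp (-(x ^ 2 / 2)) ≤ gauss t := by
      rw [gauss]; exact Real.exp_le_exp.2 (by linarith)
    have hprod : Real.exp (x ^ 2 / 2) * Real.exp (-(x ^ 2 / 2)) = 1 := by
      rw [← Real.exp_add]; simp
    have h4 : Real.exp (x ^ 2 / 2) * (Real.exp (-(x ^ 2 / 2)) * g t ^ 2) ≤
        Real.exp (x ^ 2 / 2) * (gauss t * g t ^ 2) :=
      mul_le_mul_of_nonneg_left (mul_le_mul_of_nonneg_right hge (sq_nonneg _))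
        (Real.exp_pos _).le
    rw [← mul_assoc, hprod, one_mul] at h4
    exact h4
  have hsq_int : IntegrableOn (fun t => g t ^ 2) s volume := by
    refine ((hg2.restrict (s := s)).const_mul (Real.exp (x ^ 2 / 2))).mono'
      (hgm2.restrict) ?_
    refine (ae_restrict_iff' measurableSet_uIoc).2 (Eventually.of_forall fun t ht => ?_)
    rw [Real.norm_eq_abs, abs_of_nonneg (sq_nonneg _)]
    exact hpt t ht
  have hstep3 : ∫ t in s, g t ^ 2 ≤ Real.exp (x ^ 2 / 2) * Ig := by
    calc ∫ t in s, g t ^ 2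
        ≤ ∫ t in s, Real.exp (x ^ 2 / 2) * (gauss t * g t ^ 2) :=
          setIntegral_mono_on hsq_int ((hg2.restrict).const_mul _) measurableSet_uIoc hpt
      _ = Real.exp (x ^ 2 / 2) * ∫ t in s, gauss t * g t ^ 2 := integral_const_mul _ _
      _ ≤ Real.exp (x ^ 2 / 2) * Ig := by
          refine mul_le_mul_of_nonneg_left ?_ (Real.exp_pos _).le
          exact setIntegral_le_integral hg2
            (Eventually.of_forall fun t => mul_nonneg (gauss_pos t).le (sq_nonneg _))
  set u := Real.exp (-(x ^ 2 / 4)) with hu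
  set v := Real.exp (x ^ 2 / 4) with hv
  have huv : u * v = 1 := by rw [hu, hv, ← Real.exp_add]; simp
  have hu0 : 0 < u := Real.exp_pos _
  have hv0 : 0 < v := Real.exp_pos _
  have hvu : v * u = 1 := by rw [mul_comm]; exact huv
  have hamgm : ∀ t : ℝ, |g t| ≤ (u * g t ^ 2 + v) / 2 := by
    intro t
    have h1 : 2 * u * |g t| ≤ u ^ 2 * g t ^ 2 + 1 := by
      nlinarith [sq_nonneg (u * |g t| - 1), sq_abs (g t)]
    have h2 : v * (2 * u * |g t|) ≤ v * (u ^ 2 * g t ^ 2 + 1) :=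
      mul_le_mul_of_nonneg_left h1 hv0.le
    have h3 : v * (2 * u * |g t|) = 2 * |g t| := by
      linear_combination (2 * |g t|) * hvu
    have h4 : v * (u ^ 2 * g t ^ 2 + 1) = u * g t ^ 2 + v := by
      linear_combination (u * g t ^ 2) * hvu
    rw [h3, h4] at h2
    linarith
  have habs_int : IntegrableOn (fun t => |g t|) s volume :=
    hloc_s.abs
  have hrhs_int : IntegrableOn (fun t => (u * g t ^ 2 + v) / 2) s volume := by
    refine (((hsq_int.const_mul u).add ?_).div_const 2)
    exact integrableOn_const hvol.ne
  have hbound : (∫ t in s, |g t|) ≤ (u * (Real.exp (x ^ 2 / 2) * Ig) + v * |x|) / 2 := by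
    calc (∫ t in s, |g t|)
        ≤ ∫ t in s, (u * g t ^ 2 + v) / 2 :=
          setIntegral_mono_on habs_int hrhs_int measurableSet_uIoc fun t _ => hamgm t
      _ = ((u * ∫ t in s, g t ^ 2) + v * (volume s).toReal) / 2 := by
          rw [integral_div, integral_add (hsq_int.const_mul u)
            (integrableOn_const hvol.ne), integral_const_mul, setIntegral_const,
            smul_eq_mul, measureReal_def]
          ring
      _ ≤ (u * (Real.exp (x ^ 2 / 2) * Ig) + v * |x|) / 2 := by
          rw [uIoc_volume]
          have := mul_le_mul_of_nonneg_left hstep3 hu0.le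
          linarith
  have hkey : u * Real.exp (x ^ 2 / 2) = v := by
    rw [hu, hv, ← Real.exp_add]; congr 1; ring
  calc (∫ t in s, |g t|)
      ≤ (u * (Real.exp (x ^ 2 / 2) * Ig) + v * |x|) / 2 := hbound
    _ = v * (Ig + |x|) / 2 := by rw [← mul_assoc, hkey]; ring
    _ ≤ (Ig + 1) / 2 * (1 + |x|) ^ 1 * v := by
        have hx0 : 0 ≤ |x| := abs_nonneg x
        rw [pow_one]
        have h5 : Ig + |x| ≤ (Ig + 1) * (1 + |x|) := by nlinarith
        nlinarith [mul_le_mul_of_nonneg_left h5 hv0.le]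
  -- done

/-! ### The key recursion lemma -/

lemma keyA (n : ℕ) {g f : ℝ → ℝ}
    (hgm : AEStronglyMeasurable g volume)
    (hloc : ∀ a b : ℝ, IntegrableOn g (Set.Icc a b) volume)
    (hIG : IntG g)
    (hgint : Integrable (fun t => g t * He n t * gauss t) volume)
    (hf : ∀ x, f x = f 0 + ∫ t in (0:ℝ)..x, g t) :
    ∫ x, f x * He (n + 1) x * gauss x = ∫ t, g t * He n t * gauss t := by
  set ψ : ℝ → ℝ := fun x => He (n + 1) x * gauss x with hψ
  have hψc : Continuous ψ := (continuous_He (n + 1)).mul continuous_gauss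
  have hψi : Integrable ψ volume := integrable_He_gauss (n + 1)
  set K : ℝ × ℝ → ℝ := fun p =>
    if 0 < p.2 ∧ p.2 ≤ p.1 then 1 else if p.1 < p.2 ∧ p.2 ≤ 0 then -1 else 0 with hK
  have hKmeas : Measurable K := by
    refine Measurable.ite ?_ measurable_const (Measurable.ite ?_ measurable_const
      measurable_const)
    · exact (measurableSet_lt measurable_const measurable_snd).inter
        (measurableSet_le measurable_snd measurable_fst)
    · exact (measurableSet_lt measurable_fst measurable_snd).inter
        (measurableSet_le measurable_snd measurable_const)
  set F : ℝ × ℝ → ℝ := fun p => ψ p.1 * (K p * g p.2) with hF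
  have hFm : AEStronglyMeasurable F (volume.prod volume) := by
    refine AEStronglyMeasurable.mul ?_ (AEStronglyMeasurable.mul ?_ ?_)
    · exact (hψc.comp continuous_fst).aestronglyMeasurable
    · exact hKmeas.aestronglyMeasurable
    · exact hgm.comp_snd
  -- pointwise identification of t-sections
  have hsec : ∀ x : ℝ, (fun t => K (x, t) * g t) =
      fun t => (if 0 < x then Set.indicator (Set.Ioc 0 x) g t
        else -(Set.indicator (Set.Ioc x 0) g t)) := by
    intro x
    funext t
    rcases lt_or_ge 0 x with hx | hx
    · simp only [hx, if_true]
      by_cases h1 : 0 < t ∧ t ≤ x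
      · simp only [hK, h1, and_true, if_true, one_mul]
        rw [Set.indicator_of_mem (Set.mem_Ioc.2 h1)]
      · simp only [hK]
        have h2 : ¬(x < t ∧ t ≤ 0) := by
          rintro ⟨ha, hb⟩; exact absurd (lt_trans hx ha) (not_lt.2 hb)
        rw [if_neg h1, if_neg h2, zero_mul, Set.indicator_of_notMem (by
          rw [Set.mem_Ioc]; exact h1)]
    · simp only [not_lt.2 hx, if_false]
      by_cases h1 : x < t ∧ t ≤ 0
      · simp only [hK]
        have h2 : ¬(0 < t ∧ t ≤ x) := by
          rintro ⟨ha, hb⟩; exact absurd ha (not_lt.2 (le_trans hb hx))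
        rw [if_neg h2, if_pos h1, Set.indicator_of_mem (Set.mem_Ioc.2 h1)]
        ring
      · simp only [hK]
        have h2 : ¬(0 < t ∧ t ≤ x) := by
          rintro ⟨ha, hb⟩; exact absurd ha (not_lt.2 (le_trans hb hx))
        rw [if_neg h2, if_neg h1, Set.indicator_of_notMem (by
          rw [Set.mem_Ioc]; exact h1)]
        ring
  -- t-sections are integrable
  have hsec_int : ∀ x : ℝ, Integrable (fun t => K (x, t) * g t) volume := by
    intro x
    rw [hsec x]
    rcases lt_or_ge 0 x with hx | hx
    · simp only [hx, if_true]
      rw [integrable_indicator_iff measurableSet_Ioc]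
      exact ((hloc 0 x).mono_set Set.Ioc_subset_Icc_self)
    · simp only [not_lt.2 hx, if_false]
      refine Integrable.neg ?_
      rw [integrable_indicator_iff measurableSet_Ioc]
      exact ((hloc x 0).mono_set Set.Ioc_subset_Icc_self)
  -- value of the inner t-integral
  have hinner : ∀ x : ℝ, ∫ t, F (x, t) = ψ x * ∫ t in (0:ℝ)..x, g t := by
    intro x
    simp only [hF]
    rw [integral_const_mul]
    congr 1
    rw [hsec x]
    rcases lt_or_ge 0 x with hx | hx
    · simp only [hx, if_true]
      rw [integral_indicator measurableSet_Ioc, intervalIntegral.integral_of_le hx.le]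
    · simp only [not_lt.2 hx, if_false]
      rw [integral_neg, integral_indicator measurableSet_Ioc,
        intervalIntegral.integral_symm, intervalIntegral.integral_of_le hx]
  -- |K| as indicator
  have hKabs : ∀ x t : ℝ, |K (x, t)| = Set.indicator (Set.uIoc 0 x) (fun _ => (1:ℝ)) t := by
    intro x t
    rcases lt_or_ge 0 x with hx | hx
    · have huIoc : Set.uIoc 0 x = Set.Ioc 0 x := Set.uIoc_of_le hx.le
      rw [huIoc]
      simp only [hK]
      by_cases h1 : 0 < t ∧ t ≤ x
      · simp [h1, Set.indicator_of_mem (Set.mem_Ioc.2 h1)]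
      · have h2 : ¬(x < t ∧ t ≤ 0) := by
          rintro ⟨ha, hb⟩; exact absurd (lt_trans hx ha) (not_lt.2 hb)
        simp only [if_neg h1, if_neg h2, abs_zero]
        rw [Set.indicator_of_notMem (by rw [Set.mem_Ioc]; exact h1)]
    · have huIoc : Set.uIoc 0 x = Set.Ioc x 0 := by
        rw [Set.uIoc_comm, Set.uIoc_of_le hx]
      rw [huIoc]
      simp only [hK]
      by_cases h1 : x < t ∧ t ≤ 0
      · have h2 : ¬(0 < t ∧ t ≤ x) := by
          rintro ⟨ha, hb⟩; exact absurd ha (not_lt.2 (le_trans hb hx))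
        simp only [if_neg h2, if_pos h1]
        rw [Set.indicator_of_mem (Set.mem_Ioc.2 h1)]
        norm_num
      · have h2 : ¬(0 < t ∧ t ≤ x) := by
          rintro ⟨ha, hb⟩; exact absurd ha (not_lt.2 (le_trans hb hx))
        simp only [if_neg h2, if_neg h1, abs_zero]
        rw [Set.indicator_of_notMem (by rw [Set.mem_Ioc]; exact h1)]
  -- integrability of F on the product space
  have hFint : Integrable F (volume.prod volume) := by
    refine (integrable_prod_iff hFm).2 ⟨Eventually.of_forall fun x => ?_, ?_⟩
    · exact ((hsec_int x).const_mul (ψ x))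
    · obtain ⟨C, k, hC, hCb⟩ := hIG
      obtain ⟨D, hD, hDb⟩ := He_abs_le (n + 1)
      have hmaj := (integrable_weight_quarter (k + (n + 1))).const_mul (C * D)
      refine hmaj.mono' (hFm.norm.integral_prod_right') (Eventually.of_forall fun x => ?_)
      have habsF : ∀ t : ℝ, ‖F (x, t)‖ =
          |ψ x| * Set.indicator (Set.uIoc 0 x) (fun s => |g s|) t := by
        intro t
        have he : F (x, t) = ψ x * (K (x, t) * g t) := rfl
        rw [he, Real.norm_eq_abs, abs_mul (ψ x) (K (x, t) * g t),
          abs_mul (K (x, t)) (g t), hKabs x t]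
        rcases Classical.em (t ∈ Set.uIoc 0 x) with h | h
        · rw [Set.indicator_of_mem h, Set.indicator_of_mem h, one_mul]
        · rw [Set.indicator_of_notMem h, Set.indicator_of_notMem h, zero_mul, mul_zero]
      have hval : (∫ t, ‖F (x, t)‖) = |ψ x| * ∫ t in Set.uIoc 0 x, |g t| := by
        calc (∫ t, ‖F (x, t)‖)
            = ∫ t, |ψ x| * Set.indicator (Set.uIoc 0 x) (fun s => |g s|) t := by
              simp only [habsF]
          _ = |ψ x| * ∫ t, Set.indicator (Set.uIoc 0 x) (fun s => |g s|) t :=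
              integral_const_mul _ _
          _ = |ψ x| * ∫ t in Set.uIoc 0 x, |g t| := by
              rw [integral_indicator measurableSet_uIoc]
      rw [Real.norm_eq_abs, abs_of_nonneg (integral_nonneg fun t => norm_nonneg _), hval]
      have hψb : |ψ x| ≤ D * (1 + |x|) ^ (n + 1) * gauss x := by
        have : |ψ x| = |He (n + 1) x| * gauss x := by
          rw [hψ]
          simp only []
          rw [abs_mul, abs_of_nonneg (gauss_pos x).le]
        rw [this]
        exact mul_le_mul_of_nonneg_right (hDb x) (gauss_pos x).le
      have hint_nonneg : (0:ℝ) ≤ ∫ t in Set.uIoc 0 x, |g t| :=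
        integral_nonneg fun t => abs_nonneg _
      calc |ψ x| * ∫ t in Set.uIoc 0 x, |g t|
          ≤ (D * (1 + |x|) ^ (n + 1) * gauss x) * (C * (1 + |x|) ^ k * Real.exp (x ^ 2 / 4)) :=
            mul_le_mul hψb (hCb x) hint_nonneg (mul_nonneg (by positivity) (gauss_pos x).le)
        _ = C * D * ((1 + |x|) ^ (k + (n + 1)) * Real.exp (x ^ 2 / 4) * gauss x) := by
            rw [pow_add]; ring
  -- the outer x-integral for fixed t
  have houter : ∀ t : ℝ, ∫ x, F (x, t) = g t * (He n t * gauss t) := by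
    intro t
    rcases lt_or_ge 0 t with ht | ht
    · have hxf : (fun x => F (x, t)) = fun x => g t * Set.indicator (Set.Ici t) ψ x := by
        funext x
        simp only [hF, hK]
        by_cases h : t ≤ x
        · rw [if_pos ⟨ht, h⟩, Set.indicator_of_mem (Set.mem_Ici.2 h)]
          ring
        · have h2 : ¬(x < t ∧ t ≤ 0) := by rintro ⟨_, hb⟩; exact absurd ht (not_lt.2 hb)
          rw [if_neg (by rintro ⟨_, hb⟩; exact h hb), if_neg h2,
            Set.indicator_of_notMem (by rw [Set.mem_Ici]; exact h)]
          ring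
      rw [hxf, integral_const_mul, integral_indicator measurableSet_Ici,
        integral_Ici_eq_integral_Ioi]
      congr 1
      exact integral_Ioi_He_gauss n t
    · have hxf : (fun x => F (x, t)) = fun x => g t * -(Set.indicator (Set.Iio t) ψ x) := by
        funext x
        simp only [hF, hK]
        have h2 : ¬(0 < t ∧ t ≤ x) := by rintro ⟨ha, _⟩; exact absurd ha (not_lt.2 ht)
        by_cases h : x < t
        · rw [if_neg h2, if_pos ⟨h, ht⟩, Set.indicator_of_mem (Set.mem_Iio.2 h)]
          ring
        · rw [if_neg h2, if_neg (by rintro ⟨ha, _⟩; exact h ha),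
            Set.indicator_of_notMem (by rw [Set.mem_Iio]; exact h)]
          ring
      rw [hxf, integral_const_mul, integral_neg, integral_indicator measurableSet_Iio,
        ← integral_Iic_eq_integral_Iio]
      rw [integral_Iic_He_gauss n t]
      ring
  -- put everything together
  have hswap : ∫ x, ∫ t, F (x, t) = ∫ t, ∫ x, F (x, t) :=
    integral_integral_swap hFint
  have hmarg : Integrable (fun x => ∫ t, F (x, t)) volume := hFint.integral_prod_left
  have hprod_int : Integrable (fun x => ψ x * ∫ t in (0:ℝ)..x, g t) volume :=
    hmarg.congr (Eventually.of_forall hinner)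
  calc ∫ x, f x * He (n + 1) x * gauss x
      = ∫ x, (f 0 * ψ x + ψ x * ∫ t in (0:ℝ)..x, g t) := by
        congr 1
        funext x
        rw [hf x, hψ]
        simp only []
        ring
    _ = f 0 * (∫ x, ψ x) + ∫ x, ψ x * ∫ t in (0:ℝ)..x, g t := by
        rw [integral_add ((hψi.const_mul (f 0))) hprod_int, integral_const_mul]
    _ = ∫ x, ψ x * ∫ t in (0:ℝ)..x, g t := by
        have : (∫ x, ψ x) = 0 := integral_He_succ_gauss n
        rw [this]
        ring
    _ = ∫ x, ∫ t, F (x, t) := by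
        congr 1
        funext x
        rw [hinner x]
    _ = ∫ t, ∫ x, F (x, t) := hswap
    _ = ∫ t, g t * He n t * gauss t := by
        congr 1
        funext t
        rw [houter t]
        ring


/-! ### Orthogonality -/

lemma I_eq : ∀ j i : ℕ, ∫ x, He i x * He j x * gauss x =
    if i = j then (i.factorial : ℝ) * Real.sqrt (2 * Real.pi) else 0 := by
  intro j
  induction j with
  | zero =>
    intro i
    match i with
    | 0 =>
      rw [if_pos rfl]
      simp only [He_zero, one_mul, mul_one, Nat.factorial_zero, Nat.cast_one]
      rw [integral_gauss]
    | k + 1 =>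
      simp only [He_zero, mul_one, if_neg (Nat.succ_ne_zero k)]
      exact integral_He_succ_gauss k
  | succ j IH =>
    intro i
    match i with
    | 0 =>
      simp only [He_zero, one_mul, if_neg (Ne.symm (Nat.succ_ne_zero j))]
      exact integral_He_succ_gauss j
    | k + 1 =>
      have hgm : AEStronglyMeasurable (fun t => ((k : ℝ) + 1) * He k t) volume :=
        (continuous_const.mul (continuous_He k)).aestronglyMeasurable
      have hloc : ∀ a b : ℝ, IntegrableOn (fun t => ((k : ℝ) + 1) * He k t)
          (Set.Icc a b) volume :=
        fun a b => (continuous_const.mul (continuous_He k)).integrableOn_Icc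
      have hIG : IntG (fun t => ((k : ℝ) + 1) * He k t) :=
        polyG_intG hgm (polyG_const_mul _ (polyG_He k))
      have hgint : Integrable (fun t => (((k : ℝ) + 1) * He k t) * He j t * gauss t) volume :=
        ((integrable_He_mul_gauss k j).const_mul ((k : ℝ) + 1)).congr
          (Eventually.of_forall fun t => by ring)
      have hk := keyA j hgm hloc hIG hgint (He_antideriv k)
      rw [hk]
      have : ∫ t, (((k : ℝ) + 1) * He k t) * He j t * gauss t =
          ((k : ℝ) + 1) * ∫ t, He k t * He j t * gauss t := by
        rw [← integral_const_mul]
        congr 1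
        funext t
        ring
      rw [this, IH k]
      by_cases hkj : k = j
      · subst hkj
        rw [if_pos rfl, if_pos rfl, Nat.factorial_succ]
        push_cast
        ring
      · rw [if_neg hkj, if_neg (fun h => hkj (Nat.succ_injective h)), mul_zero]

lemma sqrt_factorial_pos (n : ℕ) : 0 < Real.sqrt (n.factorial : ℝ) :=
  Real.sqrt_pos.2 (by exact_mod_cast Nat.factorial_pos n)

lemma integral_hermiteFun_mul (i j : ℕ) :
    ∫ x, hermiteFun i x * hermiteFun j x ∂stdGaussian = if i = j then 1 else 0 := by
  rw [integral_std]
  have hsi := sqrt_factorial_pos i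
  have hsj := sqrt_factorial_pos j
  have hpt : ∀ x, gauss x * (hermiteFun i x * hermiteFun j x) =
      (Real.sqrt (i.factorial : ℝ) * Real.sqrt (j.factorial : ℝ))⁻¹ *
        (He i x * He j x * gauss x) := by
    intro x
    rw [hermiteFun_eq, hermiteFun_eq]
    field_simp
  rw [show (∫ x, gauss x * (hermiteFun i x * hermiteFun j x)) =
      ∫ x, (Real.sqrt (i.factorial : ℝ) * Real.sqrt (j.factorial : ℝ))⁻¹ *
        (He i x * He j x * gauss x) by congr 1; funext x; rw [hpt x]]
  rw [integral_const_mul, I_eq j i]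
  by_cases hij : i = j
  · subst hij
    rw [if_pos rfl, if_pos rfl]
    rw [cG, Real.mul_self_sqrt (by positivity)]
    have h2π : Real.sqrt (2 * Real.pi) ≠ 0 := by positivity
    have hfac : ((i.factorial : ℝ)) ≠ 0 := by exact_mod_cast (Nat.factorial_pos i).ne'
    field_simp
  · rw [if_neg hij, if_neg hij]
    ring

lemma memLp_hermiteFun (n : ℕ) : MemLp (hermiteFun n) 2 stdGaussian := by
  have hc : Continuous (hermiteFun n) := by
    have : hermiteFun n = fun x => He n x / Real.sqrt (n.factorial : ℝ) := by
      funext x; exact hermiteFun_eq n x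
    rw [this]
    exact (continuous_He n).div_const _
  refine (memLp_two_iff_integrable_sq hc.aestronglyMeasurable).2 ?_
  rw [integrable_std_iff]
  refine ((integrable_He_mul_gauss n n).const_mul ((n.factorial : ℝ))⁻¹).congr
    (Eventually.of_forall fun x => ?_)
  show ((n.factorial : ℝ))⁻¹ * (He n x * He n x * gauss x) = gauss x * hermiteFun n x ^ 2
  rw [hermiteFun_eq, div_pow, Real.sq_sqrt (by positivity : (0:ℝ) ≤ (n.factorial : ℝ))]
  have hfac : ((n.factorial : ℝ)) ≠ 0 := by exact_mod_cast (Nat.factorial_pos n).ne'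
  field_simp

lemma coeff_tendsto {g : ℝ → ℝ} (hg : MemLp g 2 stdGaussian) :
    Tendsto (fun n => hermiteCoeff g n) atTop (𝓝 0) := by
  set G : Lp ℝ 2 stdGaussian := hg.toLp g with hG
  set e : ℕ → Lp ℝ 2 stdGaussian := fun n => (memLp_hermiteFun n).toLp (hermiteFun n) with he
  have horth : Orthonormal ℝ e := by
    rw [orthonormal_iff_ite]
    intro i j
    rw [MeasureTheory.L2.inner_def]
    have hae : (fun x => (inner ℝ ((e i : ℝ → ℝ) x) ((e j : ℝ → ℝ) x) : ℝ)) =ᵐ[_root_.stdGaussian]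
        fun x => hermiteFun i x * hermiteFun j x := by
      filter_upwards [(memLp_hermiteFun i).coeFn_toLp, (memLp_hermiteFun j).coeFn_toLp]
        with x h1 h2
      rw [RCLike.inner_apply', starRingEnd_apply, star_trivial, h1, h2]
    rw [integral_congr_ae hae, integral_hermiteFun_mul i j]
  have hinner : ∀ n, (inner ℝ (e n) G : ℝ) = hermiteCoeff g n := by
    intro n
    rw [MeasureTheory.L2.inner_def]
    have hae : (fun x => (inner ℝ ((e n : ℝ → ℝ) x) ((G : ℝ → ℝ) x) : ℝ)) =ᵐ[_root_.stdGaussian]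
        fun x => g x * hermiteFun n x := by
      filter_upwards [(memLp_hermiteFun n).coeFn_toLp, hg.coeFn_toLp] with x h1 h2
      rw [RCLike.inner_apply', starRingEnd_apply, star_trivial, h1, h2, mul_comm]
    rw [integral_congr_ae hae]
    rfl
  have hsum := horth.inner_products_summable (x := G)
  have h2 : Tendsto (fun n => ‖hermiteCoeff g n‖ ^ 2) atTop (𝓝 0) := by
    have := hsum.tendsto_atTop_zero
    simp only [hinner] at this
    exact this
  have h3 : Tendsto (fun n => |hermiteCoeff g n|) atTop (𝓝 0) := by
    have h4 := h2.sqrt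
    rw [Real.sqrt_zero] at h4
    refine h4.congr fun n => ?_
    rw [Real.norm_eq_abs, Real.sqrt_sq_eq_abs, abs_abs]
  exact squeeze_zero_norm (fun n => le_of_eq (Real.norm_eq_abs _)) h3


/-! ### Factorial inequality -/

lemma natfact : ∀ m n : ℕ, m ≤ n →
    (n + 1) ^ m * (n - m).factorial ≤ (m + 1) ^ m * n.factorial := by
  intro m
  induction m with
  | zero => intro n _; simp
  | succ m IHm =>
    intro n hn
    obtain ⟨j, rfl⟩ : ∃ j, n = m + 1 + j := ⟨n - (m + 1), by omega⟩
    have IH := IHm (m + 1 + j) (by omega)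
    rw [show m + 1 + j - m = j + 1 from by omega] at IH
    rw [show m + 1 + j - (m + 1) = j from by omega]
    refine Nat.le_of_mul_le_mul_right ?_ (Nat.succ_pos j)
    have h1 : m + 1 + j + 1 ≤ (m + 1 + 1) * (j + 1) := by nlinarith
    calc (m + 1 + j + 1) ^ (m + 1) * j.factorial * (j + 1)
        = (m + 1 + j + 1) * ((m + 1 + j + 1) ^ m * (j + 1).factorial) := by
          rw [pow_succ, Nat.factorial_succ]; ring
      _ ≤ (m + 1 + j + 1) * ((m + 1) ^ m * (m + 1 + j).factorial) :=
          Nat.mul_le_mul_left _ IH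
      _ ≤ ((m + 1 + 1) * (j + 1)) * ((m + 1 + 1) ^ m * (m + 1 + j).factorial) :=
          Nat.mul_le_mul h1 (Nat.mul_le_mul_right _ (Nat.pow_le_pow_left (by omega) m))
      _ = (m + 1 + 1) ^ (m + 1) * (m + 1 + j).factorial * (j + 1) := by
          rw [pow_succ]; ring

lemma rpow_half_eq_sqrt_pow (y : ℝ) (hy : 0 ≤ y) (m : ℕ) :
    y ^ ((m : ℝ) / 2) = Real.sqrt (y ^ m) := by
  rw [Real.sqrt_eq_rpow, ← Real.rpow_natCast y m, ← Real.rpow_mul hy]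
  congr 1
  ring

end HAux

open HAux in
/-- if `f` has an `m`-fold pseudo-derivative in `L²(γ)`, then
`a_n(f) = o((n+1)^{−m/2})`. -/
theorem hermiteCoeff_littleO_of_iterPseudoDeriv (m : ℕ) (f g : ℝ → ℝ)
    (h : IsIterPseudoDeriv m f g) (hg : MemLp g 2 stdGaussian) :
    (fun n : ℕ => hermiteCoeff f n)
      =o[atTop] (fun n : ℕ => ((n : ℝ) + 1) ^ (-(m : ℝ) / 2)) := by
  obtain ⟨gs, hgs0, hgsm, hstep⟩ := h
  have hg2γ : Integrable (fun x => g x ^ 2) stdGaussian :=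
    (memLp_two_iff_integrable_sq hg.aestronglyMeasurable).1 hg
  have hg2v : Integrable (fun x => gauss x * g x ^ 2) volume :=
    (integrable_std_iff _).1 hg2γ
  have hlocs : ∀ i, i < m → ∀ a b : ℝ, IntegrableOn (gs (i + 1)) (Set.Icc a b) volume :=
    fun i hi => (hstep i hi).1
  have hmeas : ∀ i, i < m → AEStronglyMeasurable (gs (i + 1)) volume := by
    intro i hi
    have hli : LocallyIntegrable (gs (i + 1)) volume := by
      intro x
      exact ⟨Set.Icc (x - 1) (x + 1), Icc_mem_nhds (by linarith) (by linarith), hlocs i hi _ _⟩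
    exact hli.aestronglyMeasurable
  have hIGchain : ∀ d, d < m → IntG (gs (m - d)) := by
    intro d
    induction d with
    | zero =>
      intro hd
      rw [Nat.sub_zero, hgsm]
      have hlg : ∀ a b : ℝ, IntegrableOn g (Set.Icc a b) volume := by
        have := hlocs (m - 1) (by omega)
        rw [show m - 1 + 1 = m from by omega, hgsm] at this
        exact this
      have hmg : AEStronglyMeasurable g volume := by
        have := hmeas (m - 1) (by omega)
        rw [show m - 1 + 1 = m from by omega, hgsm] at this
        exact this
      exact intG_of_L2 hlg hmg hg2v
    | succ d IH =>
      intro hd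
      have hIH := IH (by omega)
      have he1 : m - (d + 1) + 1 = m - d := by omega
      have hpd := hstep (m - (d + 1)) (by omega)
      rw [he1] at hpd
      have hPG : PolyG (gs (m - (d + 1))) := polyG_antideriv hIH hpd.2
      have hASM : AEStronglyMeasurable (gs (m - (d + 1))) volume := by
        rw [show m - (d + 1) = (m - (d + 2)) + 1 from by omega]
        exact hmeas (m - (d + 2)) (by omega)
      exact polyG_intG hASM hPG
  have hPGchain : ∀ d, d + 1 < m → PolyG (gs (m - (d + 1))) := by
    intro d hd
    have he1 : m - (d + 1) + 1 = m - d := by omega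
    have hpd := hstep (m - (d + 1)) (by omega)
    rw [he1] at hpd
    exact polyG_antideriv (hIGchain d (by omega)) hpd.2
  have hgint : ∀ d, d < m → ∀ jj : ℕ,
      Integrable (fun t => gs (m - d) t * He jj t * gauss t) volume := by
    intro d hd jj
    rcases Nat.eq_zero_or_pos d with rfl | hdpos
    · rw [Nat.sub_zero, hgsm]
      have hHe2 : Integrable (fun x => He jj x ^ 2) stdGaussian := by
        rw [integrable_std_iff]
        exact (integrable_He_mul_gauss jj jj).congr (Eventually.of_forall fun x => by ring)
      have hmaj : Integrable (fun x => (g x ^ 2 + He jj x ^ 2) / 2) stdGaussian :=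
        (hg2γ.add hHe2).div_const 2
      have hint : Integrable (fun x => g x * He jj x) stdGaussian := by
        refine hmaj.mono' (hg.aestronglyMeasurable.mul
          (continuous_He jj).aestronglyMeasurable) (Eventually.of_forall fun x => ?_)
        rw [Real.norm_eq_abs, abs_mul]
        nlinarith [sq_nonneg (|g x| - |He jj x|), sq_abs (g x), sq_abs (He jj x),
          abs_nonneg (g x), abs_nonneg (He jj x)]
      have := (integrable_std_iff (fun x => g x * He jj x)).1 hint
      exact this.congr (Eventually.of_forall fun x => by ring)
    · have hPG : PolyG (gs (m - d)) := by
        have := hPGchain (d - 1) (by omega)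
        rw [show m - (d - 1 + 1) = m - d from by omega] at this
        exact this
      have hASM : AEStronglyMeasurable (gs (m - d)) volume := by
        rw [show m - d = (m - (d + 1)) + 1 from by omega]
        exact hmeas (m - (d + 1)) (by omega)
      exact integrable_polyG_mul hASM hPG jj
  have hchain : ∀ d, d ≤ m → ∀ jj : ℕ,
      ∫ x, gs (m - d) x * He (jj + d) x * gauss x = ∫ t, g t * He jj t * gauss t := by
    intro d
    induction d with
    | zero => intro _ jj; rw [Nat.sub_zero, hgsm, Nat.add_zero]
    | succ d IH =>
      intro hd jj
      have he1 : m - (d + 1) + 1 = m - d := by omega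
      have hpd := hstep (m - (d + 1)) (by omega)
      rw [he1] at hpd
      have hASM : AEStronglyMeasurable (gs (m - d)) volume := by
        rw [show m - d = (m - (d + 1)) + 1 from by omega]
        exact hmeas (m - (d + 1)) (by omega)
      have hlg : ∀ a b : ℝ, IntegrableOn (gs (m - d)) (Set.Icc a b) volume := by
        have := hlocs (m - (d + 1)) (by omega)
        rw [he1] at this
        exact this
      have hki := keyA (jj + d) hASM hlg (hIGchain d (by omega))
        (hgint d (by omega) (jj + d)) hpd.2
      exact hki.trans (IH (by omega) jj)
  have hcoeff : ∀ n : ℕ, m ≤ n → hermiteCoeff f n =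
      Real.sqrt (((n - m).factorial : ℝ)) / Real.sqrt ((n.factorial : ℝ)) *
        hermiteCoeff g (n - m) := by
    intro n hn
    have h1 : hermiteCoeff f n =
        cG * (Real.sqrt ((n.factorial : ℝ)))⁻¹ * ∫ x, f x * He n x * gauss x := by
      rw [hermiteCoeff, integral_std]
      rw [show (∫ x, gauss x * (f x * hermiteFun n x)) =
          ∫ x, (Real.sqrt ((n.factorial : ℝ)))⁻¹ * (f x * He n x * gauss x) from by
        congr 1
        funext x
        rw [hermiteFun_eq]
        field_simp]
      rw [integral_const_mul]
      ring
    have h2 : hermiteCoeff g (n - m) =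
        cG * (Real.sqrt (((n - m).factorial : ℝ)))⁻¹ *
          ∫ x, g x * He (n - m) x * gauss x := by
      rw [hermiteCoeff, integral_std]
      rw [show (∫ x, gauss x * (g x * hermiteFun (n - m) x)) =
          ∫ x, (Real.sqrt ((((n - m)).factorial : ℝ)))⁻¹ * (g x * He (n - m) x * gauss x) from by
        congr 1
        funext x
        rw [hermiteFun_eq]
        field_simp]
      rw [integral_const_mul]
      ring
    have h3 : ∫ x, f x * He n x * gauss x = ∫ t, g t * He (n - m) t * gauss t := by
      have := hchain m le_rfl (n - m)
      rw [Nat.sub_self, hgs0, show n - m + m = n from by omega] at this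
      exact this
    rw [h1, h3, h2]
    have hs := (sqrt_factorial_pos (n - m)).ne'
    have hr := (sqrt_factorial_pos n).ne'
    field_simp
  -- final little-o
  have hden : ∀ᶠ n : ℕ in atTop, ((n : ℝ) + 1) ^ (-(m : ℝ) / 2) = 0 →
      hermiteCoeff f n = 0 := by
    refine Eventually.of_forall fun n h0 => ?_
    exact absurd h0 (Real.rpow_pos_of_pos (by positivity) _).ne'
  rw [Asymptotics.isLittleO_iff_tendsto' hden]
  have hB : Tendsto (fun n : ℕ =>
      ((m : ℝ) + 1) ^ ((m : ℝ) / 2) * |hermiteCoeff g (n - m)|) atTop (𝓝 0) := by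
    have h0 := (coeff_tendsto hg).comp (tendsto_sub_atTop_nat m)
    have h1 := h0.abs
    rw [abs_zero] at h1
    have h2 := h1.const_mul (((m : ℝ) + 1) ^ ((m : ℝ) / 2))
    rw [mul_zero] at h2
    exact h2
  refine squeeze_zero_norm' ?_ hB
  filter_upwards [eventually_ge_atTop m] with n hn
  have hpos : (0 : ℝ) < (n : ℝ) + 1 := by positivity
  have hrw : ((n : ℝ) + 1) ^ (-(m : ℝ) / 2) = (((n : ℝ) + 1) ^ ((m : ℝ) / 2))⁻¹ := by
    rw [show -(m : ℝ) / 2 = -((m : ℝ) / 2) from by ring, Real.rpow_neg hpos.le]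
  rw [hrw, div_eq_mul_inv, inv_inv, Real.norm_eq_abs, abs_mul,
    abs_of_nonneg (Real.rpow_nonneg hpos.le _)]
  rw [hcoeff n hn, abs_mul,
    abs_of_nonneg (div_nonneg (Real.sqrt_nonneg _) (Real.sqrt_nonneg _))]
  have hkey : Real.sqrt (((n - m).factorial : ℝ)) / Real.sqrt ((n.factorial : ℝ)) *
      ((n : ℝ) + 1) ^ ((m : ℝ) / 2) ≤ ((m : ℝ) + 1) ^ ((m : ℝ) / 2) := by
    rw [div_mul_eq_mul_div, div_le_iff₀ (sqrt_factorial_pos n)]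
    rw [rpow_half_eq_sqrt_pow _ hpos.le m, rpow_half_eq_sqrt_pow _ (by positivity) m]
    rw [← Real.sqrt_mul (by positivity), ← Real.sqrt_mul (by positivity)]
    refine Real.sqrt_le_sqrt ?_
    have hcast : (((n - m).factorial : ℝ)) * ((n : ℝ) + 1) ^ m ≤
        ((m : ℝ) + 1) ^ m * (n.factorial : ℝ) := by
      have := natfact m n hn
      have hc : (((n + 1) ^ m * (n - m).factorial : ℕ) : ℝ) ≤
          (((m + 1) ^ m * n.factorial : ℕ) : ℝ) := by exact_mod_cast this
      push_cast at hc
      linarith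
    linarith
  calc Real.sqrt (((n - m).factorial : ℝ)) / Real.sqrt ((n.factorial : ℝ)) *
        |hermiteCoeff g (n - m)| * ((n : ℝ) + 1) ^ ((m : ℝ) / 2)
      = Real.sqrt (((n - m).factorial : ℝ)) / Real.sqrt ((n.factorial : ℝ)) *
        ((n : ℝ) + 1) ^ ((m : ℝ) / 2) * |hermiteCoeff g (n - m)| := by ring
    _ ≤ ((m : ℝ) + 1) ^ ((m : ℝ) / 2) * |hermiteCoeff g (n - m)| :=
        mul_le_mul_of_nonneg_right hkey (abs_nonneg _)
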